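/- arXiv:2101.01148 — 4 statements merged into one kernel-verified Lean document; each statement's English description precedes it below -/
import Mathlib

section
/- If φ: ℝ → ℂ is real analytic (given by a convergent power series around 0 on all of ℝ) and satisfies φ(x)+φ(y)+φ(z) = φ(a)+φ(b)+φ(c) for all real x,y,z,a,b,c with x+y+z = a+b+c and x²+y²+z² = a²+b²+c², then φ is a quadratic polynomial: φ(x) = Ax² + Bx + C for some constants A, B, C ∈ ℂ. -/
theorem stmt_0 (φ : ℝ → ℂ) (p : FormalMultilinearSeries ℝ ℝ ℂ)
    (hφ : HasFPowerSeriesOnBall φ p 0 ⊤)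
    (hfun : ∀ x y z a b c : ℝ, x + y + z = a + b + c →
      x ^ 2 + y ^ 2 + z ^ 2 = a ^ 2 + b ^ 2 + c ^ 2 →
      φ x + φ y + φ z = φ a + φ b + φ c) :
    ∃ A B C : ℂ, ∀ x : ℝ, φ x = A * (x : ℂ) ^ 2 + B * (x : ℂ) + C := by
  have hdiff : Differentiable ℝ φ := fun x =>
    (hφ.analyticAt_of_mem (by simp [EMetric.mem_ball, edist_lt_top])).differentiableAt
  -- key derivative identity
  have key : ∀ a b c : ℝ,
      ((b : ℂ) - c) * deriv φ a + ((c : ℂ) - a) * deriv φ b + ((a : ℂ) - b) * deriv φ c = 0 := by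
    intro a b c
    set q : ℝ := Real.sqrt 3 with hqdef
    have hq : q ^ 2 = 3 := Real.sq_sqrt (by norm_num)
    have hq0 : q ≠ 0 := by positivity
    set s : ℝ := a + b + c with hs
    set u : ℝ → ℝ := fun t => s/3 + Real.cos t * (a - s/3) + Real.sin t * ((b - c)/q) with hu
    set v : ℝ → ℝ := fun t => s/3 + Real.cos t * (b - s/3) + Real.sin t * ((c - a)/q) with hv
    set w : ℝ → ℝ := fun t => s/3 + Real.cos t * (c - s/3) + Real.sin t * ((a - b)/q) with hw
    have hu0 : u 0 = a := by simp [hu]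
    have hv0 : v 0 = b := by simp [hv]
    have hw0 : w 0 = c := by simp [hw]
    have H : ∀ t, φ (u t) + φ (v t) + φ (w t) = φ a + φ b + φ c := by
      intro t
      apply hfun
      · simp only [hu, hv, hw]; ring
      · have hcs := Real.cos_sq_add_sin_sq t
        simp only [hu, hv, hw]
        field_simp
        linear_combination (27*(a^2+b^2+c^2) - 9*(a+b+c)^2) * hcs +
          (3*(a+b+c)^2 - 9*(a^2+b^2+c^2))*(1 - Real.cos t^2) * hq
    -- derivative of u at 0
    have hud : HasDerivAt u ((b - c)/q) 0 := by
      have : HasDerivAt u (0 + (-Real.sin 0 * (a - s/3)) + (Real.cos 0 * ((b - c)/q))) 0 := by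
        exact ((hasDerivAt_const 0 (s/3)).add
          ((Real.hasDerivAt_cos 0).mul_const (a - s/3))).add
          ((Real.hasDerivAt_sin 0).mul_const ((b - c)/q))
      simpa using this
    have hvd : HasDerivAt v ((c - a)/q) 0 := by
      have : HasDerivAt v (0 + (-Real.sin 0 * (b - s/3)) + (Real.cos 0 * ((c - a)/q))) 0 := by
        exact ((hasDerivAt_const 0 (s/3)).add
          ((Real.hasDerivAt_cos 0).mul_const (b - s/3))).add
          ((Real.hasDerivAt_sin 0).mul_const ((c - a)/q))
      simpa using this
    have hwd : HasDerivAt w ((a - b)/q) 0 := by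
      have : HasDerivAt w (0 + (-Real.sin 0 * (c - s/3)) + (Real.cos 0 * ((a - b)/q))) 0 := by
        exact ((hasDerivAt_const 0 (s/3)).add
          ((Real.hasDerivAt_cos 0).mul_const (c - s/3))).add
          ((Real.hasDerivAt_sin 0).mul_const ((a - b)/q))
      simpa using this
    have h1 : HasDerivAt (fun t => φ (u t)) (((b - c)/q) • deriv φ a) 0 := by
      have := HasDerivAt.scomp (0 : ℝ) (h := u) (g₁ := φ)
        (by rw [hu0]; exact (hdiff a).hasDerivAt) hud
      exact this
    have h2 : HasDerivAt (fun t => φ (v t)) (((c - a)/q) • deriv φ b) 0 := by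
      have := HasDerivAt.scomp (0 : ℝ) (h := v) (g₁ := φ)
        (by rw [hv0]; exact (hdiff b).hasDerivAt) hvd
      exact this
    have h3 : HasDerivAt (fun t => φ (w t)) (((a - b)/q) • deriv φ c) 0 := by
      have := HasDerivAt.scomp (0 : ℝ) (h := w) (g₁ := φ)
        (by rw [hw0]; exact (hdiff c).hasDerivAt) hwd
      exact this
    have hsum : HasDerivAt (fun t => φ (u t) + φ (v t) + φ (w t))
        (((b - c)/q) • deriv φ a + ((c - a)/q) • deriv φ b + ((a - b)/q) • deriv φ c) 0 :=
      (h1.add h2).add h3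
    have hconst : (fun t => φ (u t) + φ (v t) + φ (w t)) = fun _ => φ a + φ b + φ c :=
      funext H
    rw [hconst] at hsum
    have hzero : ((b - c)/q) • deriv φ a + ((c - a)/q) • deriv φ b + ((a - b)/q) • deriv φ c
        = 0 := ((hasDerivAt_const 0 (φ a + φ b + φ c)).unique hsum).symm
    have hq0' : (q : ℂ) ≠ 0 := by exact_mod_cast hq0
    have : (q : ℂ)⁻¹ * (((b : ℂ) - c) * deriv φ a + ((c : ℂ) - a) * deriv φ b
        + ((a : ℂ) - b) * deriv φ c) = 0 := by
      rw [← hzero]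
      simp only [Complex.real_smul]
      push_cast
      ring
    rcases mul_eq_zero.1 this with h | h
    · exact absurd h (inv_ne_zero hq0')
    · exact h
  -- φ' is affine
  have haff : ∀ x : ℝ, deriv φ x = deriv φ 0 + (x : ℂ) * (deriv φ 1 - deriv φ 0) := by
    intro x
    have := key x 1 0
    push_cast at this ⊢
    linear_combination this
  refine ⟨(deriv φ 1 - deriv φ 0)/2, deriv φ 0, φ 0, ?_⟩
  set A : ℂ := (deriv φ 1 - deriv φ 0)/2 with hA
  set B : ℂ := deriv φ 0 with hB
  have hpoly : ∀ x : ℝ, HasDerivAt (fun y : ℝ => A * (y : ℂ) ^ 2 + B * (y : ℂ) + φ 0)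
      (B + (x : ℂ) * (deriv φ 1 - deriv φ 0)) x := by
    intro x
    have hid : HasDerivAt (fun y : ℝ => (y : ℂ)) 1 x := by
      exact (Complex.ofRealCLM.hasDerivAt (x := x)).congr_deriv (by simp)
    have h1 : HasDerivAt (fun y : ℝ => A * (y : ℂ) ^ 2) (A * (1 * (x:ℂ) + (x:ℂ) * 1)) x := by
      have h := (hid.mul hid).const_mul A
      simp only [← pow_two] at h
      exact h
    have h2 : HasDerivAt (fun y : ℝ => B * (y : ℂ)) (B * 1) x := hid.const_mul B
    have h := (h1.add h2).add_const (φ 0)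
    have he : A * (1 * (x:ℂ) + (x:ℂ) * 1) + B * 1 = B + (x : ℂ) * (deriv φ 1 - deriv φ 0) := by
      rw [hA]; ring
    rw [he] at h
    exact h
  have hderiv0 : ∀ x : ℝ,
      deriv (fun y : ℝ => φ y - (A * (y : ℂ) ^ 2 + B * (y : ℂ) + φ 0)) x = 0 := by
    intro x
    have h := ((hdiff x).hasDerivAt.sub (hpoly x))
    rw [haff x] at h
    refine h.deriv.trans ?_
    rw [hB]; ring
  have hdiff2 : Differentiable ℝ (fun y : ℝ => φ y - (A * (y : ℂ) ^ 2 + B * (y : ℂ) + φ 0)) :=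
    fun x => ((hdiff x).hasDerivAt.sub (hpoly x)).differentiableAt
  intro x
  have := is_const_of_deriv_eq_zero hdiff2 hderiv0 x 0
  have h0 : φ x - (A * (x : ℂ) ^ 2 + B * (x : ℂ) + φ 0) = 0 := by
    rw [this]; push_cast; ring
  linear_combination h0
end

section
/- If f: ℝ → ℂ is real analytic, nowhere vanishing, and satisfies f(x)f(y)f(z) = f(a)f(b)f(c) whenever x+y+z = a+b+c and x²+y²+z² = a²+b²+c², then f(x) = exp(Ax² + Bx + C) for some complex constants A, B, C. -/
lemma hom_exp (g : ℝ → ℂ) (hg : Differentiable ℝ g)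
    (hadd : ∀ x y : ℝ, g (x + y) = g x * g y) (h0 : g 0 = 1) :
    ∃ B : ℂ, ∀ x : ℝ, g x = Complex.exp (B * x) := by
  set B := deriv g 0 with hB
  have hd : ∀ x, HasDerivAt g (B * g x) x := by
    intro x
    have h1 : HasDerivAt g B 0 := by
      have := (hg 0).hasDerivAt
      rw [← hB] at this; exact this
    have h2 : HasDerivAt (fun t : ℝ => g (t - x)) (B * 1) x := by
      have hin : HasDerivAt (fun t : ℝ => t - x) 1 x := (hasDerivAt_id x).sub_const x
      simpa [Function.comp_def] using h1.scomp_of_eq x hin (by ring)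
    have h3 : HasDerivAt (fun t : ℝ => g x * g (t - x)) (g x * (B * 1)) x := h2.const_mul _
    have heq : (fun t : ℝ => g x * g (t - x)) = g := by
      funext t; rw [← hadd]; ring_nf
    rw [heq] at h3
    simpa [mul_comm] using h3
  refine ⟨B, fun x => ?_⟩
  have hcon : ∀ x : ℝ, HasDerivAt (fun x : ℝ => g x * Complex.exp (-(B * x))) 0 x := by
    intro x
    have hx : HasDerivAt (fun x : ℝ => -(B * (x : ℂ))) (-B) x := by
      have h1 : HasDerivAt (fun x : ℝ => (x : ℂ)) 1 x := Complex.ofRealCLM.hasDerivAt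
      have := (h1.const_mul B).neg; rw [mul_one] at this; exact this
    have he : HasDerivAt (fun x : ℝ => Complex.exp (-(B * x)))
        (Complex.exp (-(B * x)) * (-B)) x := hx.cexp
    have := (hd x).mul he
    exact this.congr_deriv (by ring)
  have key : g x * Complex.exp (-(B * x)) = 1 := by
    have := is_const_of_deriv_eq_zero (fun y => (hcon y).differentiableAt)
      (fun y => (hcon y).deriv) x 0
    simpa [h0] using this
  have h2 := congrArg (· * Complex.exp (B * x)) key
  simp only [mul_assoc, ← Complex.exp_add, neg_add_cancel, Complex.exp_zero, mul_one, one_mul] at h2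
  exact h2

theorem stmt_1 (f : ℝ → ℂ) (hf : ∀ x : ℝ, AnalyticAt ℝ f x)
    (hne : ∀ x : ℝ, f x ≠ 0)
    (hfun : ∀ x y z a b c : ℝ, x + y + z = a + b + c →
      x ^ 2 + y ^ 2 + z ^ 2 = a ^ 2 + b ^ 2 + c ^ 2 →
      f x * f y * f z = f a * f b * f c) :
    ∃ A B C : ℂ, ∀ x : ℝ,
      f x = Complex.exp (A * (x : ℂ) ^ 2 + B * (x : ℂ) + C) := by
  have hdf : Differentiable ℝ f := fun x => (hf x).differentiableAt
  -- key identity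
  have K : ∀ x y a b : ℝ, a * b = x * y →
      f (x + y) * f a * f b = f x * f y * f (a + b) := by
    intro x y a b hab
    exact hfun (x + y) a b x y (a + b) (by ring) (by nlinarith [hab])
  set S : ℝ → ℂ := fun p => f (p + 1) * f 0 / (f p * f 1) with hSdef
  have Sne : ∀ p, S p ≠ 0 := by
    intro p
    simp only [hSdef]
    exact div_ne_zero (mul_ne_zero (hne _) (hne 0)) (mul_ne_zero (hne p) (hne 1))
  have S0 : S 0 = 1 := by
    show f (0 + 1) * f 0 / (f 0 * f 1) = 1
    rw [zero_add, mul_comm]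
    exact div_self (mul_ne_zero (hne 0) (hne 1))
  have hS : ∀ x y : ℝ, f (x + y) * f 0 = f x * f y * S (x * y) := by
    intro x y
    have hK := K x y (x * y) 1 (by ring)
    show f (x + y) * f 0 = f x * f y * (f (x * y + 1) * f 0 / (f (x * y) * f 1))
    have hd : f (x * y) * f 1 ≠ 0 := mul_ne_zero (hne (x * y)) (hne 1)
    rw [mul_div_assoc', eq_div_iff hd]
    linear_combination f 0 * hK
  have hOrtho : ∀ x y z : ℝ, S (x * y) * S (x * z + y * z) = S (x * z) * S (x * y + y * z) := by
    intro x y z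
    have E1 : f (x + y + z) * f 0 = f (x + y) * f z * S (x * z + y * z) := by
      have := hS (x + y) z
      rw [show (x + y) * z = x * z + y * z by ring] at this
      exact this
    have E2 := hS x y
    have E1' : f (x + y + z) * f 0 = f (x + z) * f y * S (x * y + y * z) := by
      have := hS (x + z) y
      rw [show (x + z) * y = x * y + y * z by ring, show x + z + y = x + y + z by ring] at this
      exact this
    have E2' := hS x z
    have h1 : f (x + y + z) * f 0 * f 0 = f x * f y * f z * (S (x * y) * S (x * z + y * z)) := by
      linear_combination f 0 * E1 + (f z * S (x * z + y * z)) * E2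
    have h2 : f (x + y + z) * f 0 * f 0 = f x * f y * f z * (S (x * z) * S (x * y + y * z)) := by
      linear_combination f 0 * E1' + (f y * S (x * y + y * z)) * E2'
    have h3 := h1.symm.trans h2
    have hne3 : f x * f y * f z ≠ 0 := mul_ne_zero (mul_ne_zero (hne x) (hne y)) (hne z)
    exact mul_left_cancel₀ hne3 h3
  -- instance I : S u * S (-t - u) = S (-t) for t > 0
  have hI : ∀ (u t : ℝ), 0 < t → S u * S (-t - u) = S (-t) := by
    intro u t ht
    set x := Real.sqrt t with hx
    have hx0 : x ≠ 0 := by positivity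
    have hxx : x * x = t := Real.mul_self_sqrt ht.le
    have h := hOrtho x (u / x) (-x)
    rw [show x * (u / x) = u by field_simp, show x * (-x) = -t by rw [← hxx]; ring,
        show u / x * (-x) = -u by field_simp,
        show -t + -u = -t - u by ring, show u + -u = (0:ℝ) by ring, S0, mul_one] at h
    exact h
  have hII : ∀ (u t : ℝ), 0 < t → S u * S (t + u) = S t * S (2 * u) := by
    intro u t ht
    set x := Real.sqrt t with hx
    have hx0 : x ≠ 0 := by positivity
    have hxx : x * x = t := Real.mul_self_sqrt ht.le
    have h := hOrtho x (u / x) x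
    rw [show x * (u / x) = u by field_simp, hxx,
        show u / x * x = u by field_simp,
        show u + u = 2 * u by ring] at h
    exact h
  have negadd : ∀ p q : ℝ, p + q < 0 → S p * S q = S (p + q) := by
    intro p q hpq
    have := hI p (-(p + q)) (by linarith)
    rw [show -(-(p + q)) - p = q by ring, show -(-(p+q)) = p + q by ring] at this
    exact this
  have inv : ∀ t : ℝ, S t * S (-t) = 1 := by
    have pos : ∀ t : ℝ, 0 < t → S t * S (-t) = 1 := by
      intro t ht
      have h1 := hII (-t) t ht
      rw [show t + -t = (0:ℝ) by ring, S0, mul_one,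
          show 2 * (-t) = -t + -t by ring, ← negadd (-t) (-t) (by linarith)] at h1
      -- h1 : S (-t) = S t * (S (-t) * S (-t))
      have hne' := Sne (-t)
      have h2 : S (-t) * 1 = S (-t) * (S t * S (-t)) := by linear_combination h1
      have h3 := mul_left_cancel₀ hne' h2
      linear_combination -h3
    intro t
    rcases lt_trichotomy t 0 with h | h | h
    · have := pos (-t) (by linarith)
      rw [neg_neg] at this
      linear_combination this
    · simp [h, S0]
    · exact pos t h
  have SCauchy : ∀ p q : ℝ, S (p + q) = S p * S q := by
    intro p q
    rcases lt_trichotomy (p + q) 0 with h | h | h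
    · exact (negadd p q h).symm
    · have hq : q = -p := by linarith
      rw [h, S0, hq]
      exact (inv p).symm
    · have h4 := negadd (-p) (-q) (by linarith)
      rw [show -p + -q = -(p + q) by ring] at h4
      have i1 := inv p
      have i2 := inv q
      have i3 := inv (p + q)
      have hnep := Sne (-p)
      have hneq := Sne (-q)
      have l : S (p + q) * (S (-p) * S (-q)) = 1 := by
        linear_combination S (p + q) * h4 + i3
      have r : S p * S q * (S (-p) * S (-q)) = 1 := by
        linear_combination (S q * S (-q)) * i1 + i2
      exact mul_right_cancel₀ (mul_ne_zero hnep hneq) (l.trans r.symm)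
  -- S is differentiable
  have hDS : Differentiable ℝ S := by
    have d1 : Differentiable ℝ (fun p : ℝ => f (p + 1)) :=
      hdf.comp (differentiable_id.add_const 1)
    exact (d1.mul_const (f 0)).div (hdf.mul_const (f 1))
      (fun p => mul_ne_zero (hne p) (hne 1))
  obtain ⟨B₀, hSexp⟩ := hom_exp S hDS (fun x y => SCauchy x y) S0
  -- define g
  set g : ℝ → ℂ := fun t => f t / f 0 * Complex.exp (-(B₀ / 2) * (t : ℂ) ^ 2) with hgdef
  have hDg : Differentiable ℝ g := by
    have d1 : Differentiable ℝ (fun t : ℝ => (t : ℂ)) := Complex.ofRealCLM.differentiable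
    have d2 : Differentiable ℝ (fun t : ℝ => -(B₀ / 2) * (t : ℂ) ^ 2) := (d1.pow 2).const_mul _
    exact (hdf.div_const (f 0)).mul d2.cexp
  have hgadd : ∀ x y : ℝ, g (x + y) = g x * g y := by
    intro x y
    have h1 := hS x y
    rw [hSexp (x * y)] at h1
    have hc : (((x + y : ℝ)) : ℂ) = (x : ℂ) + (y : ℂ) := by push_cast; ring
    have hc2 : (((x * y : ℝ)) : ℂ) = (x : ℂ) * (y : ℂ) := by push_cast; ring
    rw [hc2] at h1
    show f (x + y) / f 0 * Complex.exp (-(B₀ / 2) * (((x + y : ℝ)) : ℂ) ^ 2) =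
      (f x / f 0 * Complex.exp (-(B₀ / 2) * (x : ℂ) ^ 2)) *
      (f y / f 0 * Complex.exp (-(B₀ / 2) * (y : ℂ) ^ 2))
    rw [hc]
    have hexp : Complex.exp (-(B₀ / 2) * ((x : ℂ) + (y : ℂ)) ^ 2) *
        Complex.exp (B₀ * ((x : ℂ) * (y : ℂ))) =
        Complex.exp (-(B₀ / 2) * (x : ℂ) ^ 2) * Complex.exp (-(B₀ / 2) * (y : ℂ) ^ 2) := by
      rw [← Complex.exp_add, ← Complex.exp_add]
      congr 1
      ring
    calc f (x + y) / f 0 * Complex.exp (-(B₀ / 2) * ((x : ℂ) + (y : ℂ)) ^ 2)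
        = (f (x + y) * Complex.exp (-(B₀ / 2) * ((x : ℂ) + (y : ℂ)) ^ 2)) / f 0 := by ring
      _ = ((f x * Complex.exp (-(B₀ / 2) * (x : ℂ) ^ 2)) *
            (f y * Complex.exp (-(B₀ / 2) * (y : ℂ) ^ 2))) / (f 0 * f 0) := by
          rw [div_eq_div_iff (hne 0) (mul_ne_zero (hne 0) (hne 0))]
          linear_combination f 0 * Complex.exp (-(B₀ / 2) * ((x : ℂ) + (y : ℂ)) ^ 2) * h1 +
            f 0 * f x * f y * hexp
      _ = (f x / f 0 * Complex.exp (-(B₀ / 2) * (x : ℂ) ^ 2)) *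
            (f y / f 0 * Complex.exp (-(B₀ / 2) * (y : ℂ) ^ 2)) := by ring
  have hg0 : g 0 = 1 := by
    show f 0 / f 0 * Complex.exp (-(B₀ / 2) * ((0 : ℝ) : ℂ) ^ 2) = 1
    rw [div_self (hne 0)]
    norm_num
  obtain ⟨B, hgexp⟩ := hom_exp g hDg hgadd hg0
  refine ⟨B₀ / 2, B, Complex.log (f 0), fun x => ?_⟩
  have hx := hgexp x
  have hx' : f x * Complex.exp (-(B₀ / 2) * (x : ℂ) ^ 2) = Complex.exp (B * x) * f 0 := by
    have h := hx
    rw [hgdef] at h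
    simp only at h
    rw [div_mul_eq_mul_div, div_eq_iff (hne 0)] at h
    exact h
  have hexp2 : Complex.exp (-(B₀ / 2) * (x : ℂ) ^ 2) * Complex.exp ((B₀ / 2) * (x : ℂ) ^ 2) = 1 := by
    rw [← Complex.exp_add]
    norm_num
  rw [Complex.exp_add, Complex.exp_add, Complex.exp_log (hne 0)]
  linear_combination Complex.exp ((B₀ / 2) * (x : ℂ) ^ 2) * hx' - f x * hexp2
end

section
/- For every integer k ≥ 3 and every real x ≠ 0, 2x^k + (-x)^k ≠ ((1+√5)/2 · x)^k + ((1-√5)/2 · x)^k. Equivalently, the quantity 2x^k + (-x)^k - (((1+√5)/2)x)^k - (((1-√5)/2)x)^k is nonzero. -/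
theorem stmt_5 (k : ℕ) (hk : 3 ≤ k) (x : ℝ) (hx : x ≠ 0) :
    2 * x ^ k + (-x) ^ k ≠
      ((1 + Real.sqrt 5) / 2 * x) ^ k + ((1 - Real.sqrt 5) / 2 * x) ^ k := by
  set s := Real.sqrt 5 with hs
  have hs2 : s ^ 2 = 5 := Real.sq_sqrt (by norm_num)
  have hs0 : 0 ≤ s := Real.sqrt_nonneg 5
  have hsl : 2.2 < s := by nlinarith [sq_nonneg (s - 2.2)]
  have hsu : s < 2.3 := by nlinarith [sq_nonneg (s - 2.3)]
  set φ := (1 + s) / 2 with hφ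
  set ψ := (1 - s) / 2 with hψ
  have hφ1 : 1 ≤ φ := by rw [hφ]; nlinarith
  have hφ3 : (4 : ℝ) < φ ^ 3 := by rw [hφ]; nlinarith
  have hφk : φ ^ 3 ≤ φ ^ k := pow_le_pow_right₀ hφ1 hk
  have hψabs : |ψ| < 1 := by rw [abs_lt, hψ]; constructor <;> nlinarith
  have hψk : -1 < ψ ^ k := by
    have h1 : |ψ ^ k| < 1 := by
      rw [abs_pow]
      exact pow_lt_one₀ (abs_nonneg ψ) hψabs (by omega)
    have := abs_lt.mp h1
    linarith [this.1]
  have hm1 : ((-1 : ℝ)) ^ k ≤ 1 := by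
    rcases Nat.even_or_odd k with h | h
    · rw [h.neg_one_pow]
    · rw [h.neg_one_pow]; norm_num
  have hlucas : (2 : ℝ) + (-1) ^ k < φ ^ k + ψ ^ k := by nlinarith
  intro h
  have hxk : x ^ k ≠ 0 := pow_ne_zero k hx
  rw [mul_pow, mul_pow, neg_pow] at h
  have : (2 + (-1 : ℝ) ^ k) * x ^ k = (φ ^ k + ψ ^ k) * x ^ k := by ring_nf; ring_nf at h; linarith
  have := mul_right_cancel₀ hxk this
  linarith
end

section
/- Suppose a power series φ(x) = Σ_{k≥0} c_k x^k with infinite radius of convergence satisfies Σ_{k≥3} c_k (a^k+b^k+c^k-d^k-e^k-g^k) = 0 for all real triples (a,b,c),(d,e,g) with a+b+c = d+e+g and a²+b²+c² = d²+e²+g². Then c_k = 0 for all k ≥ 3. -/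
open Filter FormalMultilinearSeries

theorem stmt_6 (co : ℕ → ℂ)
    (hconv : ∀ x : ℝ, Summable fun k : ℕ => ‖co k‖ * |x| ^ k)
    (hfun : ∀ a b c d e g : ℝ, a + b + c = d + e + g →
      a ^ 2 + b ^ 2 + c ^ 2 = d ^ 2 + e ^ 2 + g ^ 2 →
      (∑' k : ℕ, if 3 ≤ k then
        co k * (((a : ℂ) ^ k + (b : ℂ) ^ k + (c : ℂ) ^ k) -
          ((d : ℂ) ^ k + (e : ℂ) ^ k + (g : ℂ) ^ k)) else 0) = 0) :
    ∀ k : ℕ, 3 ≤ k → co k = 0 := by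
  have s5 : Real.sqrt 5 ^ 2 = 5 := Real.sq_sqrt (by norm_num)
  have s5nn : (0:ℝ) ≤ Real.sqrt 5 := Real.sqrt_nonneg 5
  have s5ge : (2:ℝ) ≤ Real.sqrt 5 := by nlinarith
  have s5le : Real.sqrt 5 ≤ 3 := by nlinarith
  set φ : ℝ := (1 + Real.sqrt 5) / 2 with hφ
  set ψ : ℝ := (1 - Real.sqrt 5) / 2 with hψ
  have hφ1 : (1:ℝ) ≤ φ := by rw [hφ]; nlinarith
  have hψabs : |ψ| = (Real.sqrt 5 - 1) / 2 := by
    rw [hψ, abs_of_nonpos (by nlinarith)]; ring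
  have hψ1 : |ψ| ≤ 1 := by rw [hψabs]; nlinarith
  -- the real multiplier
  set m : ℕ → ℝ := fun k => 2 + (-1:ℝ) ^ k - φ ^ k - ψ ^ k with hm
  have hmneg : ∀ k : ℕ, 3 ≤ k → m k < 0 := by
    intro k hk
    have h1 : φ ^ 3 ≤ φ ^ k := pow_le_pow_right₀ hφ1 hk
    have h2 : |ψ| ^ k ≤ |ψ| ^ 3 := pow_le_pow_of_le_one (abs_nonneg _) hψ1 hk
    have h3 : -|ψ| ^ k ≤ ψ ^ k := by
      rw [← abs_pow]; exact neg_abs_le _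
    have h4 : (-1:ℝ) ^ k ≤ 1 := by
      rcases Nat.even_or_odd k with h | h
      · simp [h.neg_one_pow]
      · simp [h.neg_one_pow]
    have hφ3 : φ ^ 3 = 2 + Real.sqrt 5 := by rw [hφ]; field_simp; nlinarith
    have hψ3 : |ψ| ^ 3 = Real.sqrt 5 - 2 := by rw [hψabs]; field_simp; nlinarith
    simp only [hm]
    nlinarith
  -- the coefficient sequence
  set a : ℕ → ℂ := fun k => if 3 ≤ k then co k * (m k : ℂ) else 0 with ha
  -- norm bound
  have hbound : ∀ k : ℕ, ‖a k‖ ≤ 5 * (‖co k‖ * φ ^ k) := by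
    intro k
    rw [ha]
    by_cases hk : 3 ≤ k
    · simp only [hk, if_true]
      rw [norm_mul, Complex.norm_real]
      have hφk : (1:ℝ) ≤ φ ^ k := one_le_pow₀ hφ1
      have h2 : |ψ ^ k| ≤ φ ^ k := by
        rw [abs_pow]
        exact pow_le_pow_left₀ (abs_nonneg _) (hψ1.trans hφ1) k
      have h3 : |m k| ≤ 5 * φ ^ k := by
        rw [hm]
        have h4 : |(-1:ℝ)^k| = 1 := by rw [abs_pow]; simp
        have h5 : |φ ^ k| = φ ^ k := abs_of_nonneg (by positivity)
        calc |2 + (-1:ℝ)^k - φ^k - ψ^k| ≤ |(2:ℝ)| + |(-1:ℝ)^k| + |φ^k| + |ψ^k| := by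
              have := abs_sub (2 + (-1:ℝ)^k - φ^k) (ψ^k)
              have := abs_sub (2 + (-1:ℝ)^k) (φ^k)
              have := abs_add_le (2:ℝ) ((-1:ℝ)^k)
              calc |2 + (-1:ℝ)^k - φ^k - ψ^k| ≤ |2 + (-1:ℝ)^k - φ^k| + |ψ^k| :=
                    abs_sub _ _
                _ ≤ |2 + (-1:ℝ)^k| + |φ^k| + |ψ^k| := by
                    have := abs_sub (2 + (-1:ℝ)^k) (φ^k); linarith
                _ ≤ |(2:ℝ)| + |(-1:ℝ)^k| + |φ^k| + |ψ^k| := by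
                    have := abs_add_le (2:ℝ) ((-1:ℝ)^k); linarith
          _ ≤ 5 * φ ^ k := by rw [h4, h5]; rw [abs_of_nonneg (by norm_num : (0:ℝ) ≤ 2)]; nlinarith
      calc ‖co k‖ * |m k| ≤ ‖co k‖ * (5 * φ ^ k) :=
            mul_le_mul_of_nonneg_left h3 (norm_nonneg _)
        _ = 5 * (‖co k‖ * φ ^ k) := by ring
    · simp only [hk, if_false, norm_zero]
      positivity
  -- the power series
  set p : FormalMultilinearSeries ℂ ℂ ℂ := FormalMultilinearSeries.ofScalars ℂ a with hp
  have hrad : p.radius = ⊤ := by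
    apply p.radius_eq_top_of_summable_norm
    intro r
    have : Summable fun k : ℕ => 5 * (‖co k‖ * |φ * r| ^ k) := (hconv (φ * r)).mul_left 5
    apply Summable.of_nonneg_of_le (fun k => by positivity) ?_ this
    intro k
    rw [hp, FormalMultilinearSeries.ofScalars_norm]
    have h1 : ‖a k‖ * (r:ℝ) ^ k ≤ 5 * (‖co k‖ * φ ^ k) * (r:ℝ) ^ k :=
      mul_le_mul_of_nonneg_right (hbound k) (by positivity)
    have h2 : |φ * (r:ℝ)| = φ * r := abs_of_nonneg (by positivity)
    rw [h2, mul_pow]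
    calc ‖a k‖ * (r:ℝ) ^ k ≤ 5 * (‖co k‖ * φ ^ k) * (r:ℝ) ^ k := h1
      _ = 5 * (‖co k‖ * (φ ^ k * (r:ℝ) ^ k)) := by ring
  have hball : HasFPowerSeriesOnBall p.sum p 0 ⊤ := by
    rw [← hrad]; exact p.hasFPowerSeriesOnBall (by rw [hrad]; exact ENNReal.zero_lt_top)
  -- vanishing on the reals
  have hzero : ∀ x : ℝ, p.sum (x : ℂ) = 0 := by
    intro x
    have key := hfun x (-x) x (φ * x) (ψ * x) 0
      (by rw [hφ, hψ]; ring) (by rw [hφ, hψ]; field_simp; nlinarith)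
    have : p.sum (x : ℂ) = ∑' k : ℕ, if 3 ≤ k then
        co k * ((((x:ℝ) : ℂ) ^ k + ((-x : ℝ) : ℂ) ^ k + ((x:ℝ) : ℂ) ^ k) -
          (((φ * x : ℝ) : ℂ) ^ k + ((ψ * x : ℝ) : ℂ) ^ k + ((0 : ℝ) : ℂ) ^ k)) else 0 := by
      show FormalMultilinearSeries.ofScalarsSum a (x:ℂ) = _
      rw [FormalMultilinearSeries.ofScalars_sum_eq]
      apply tsum_congr
      intro k
      rw [ha]
      by_cases hk : 3 ≤ k
      · simp only [hk, if_true, smul_eq_mul]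
        have h0 : ((0:ℝ):ℂ) ^ k = 0 := by
          rw [Complex.ofReal_zero]; exact zero_pow (by omega)
        rw [h0, hm]
        push_cast
        ring
      · simp [hk]
    rw [this, key]
  -- identity theorem: p.sum = 0 everywhere
  have han : AnalyticOnNhd ℂ p.sum Set.univ := fun z _ =>
    hball.analyticAt_of_mem (by simp)
  have hfreq : ∃ᶠ z in nhdsWithin (0:ℂ) {(0:ℂ)}ᶜ, p.sum z = 0 := by
    have ht : Tendsto (fun n : ℕ => ((1 / (n + 1) : ℝ) : ℂ)) atTop
        (nhdsWithin (0:ℂ) {(0:ℂ)}ᶜ) := by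
      rw [tendsto_nhdsWithin_iff]
      constructor
      · have h2 := (Complex.continuous_ofReal.tendsto 0).comp
          tendsto_one_div_add_atTop_nhds_zero_nat
        have h3 : ((0:ℝ):ℂ) = 0 := Complex.ofReal_zero
        rw [h3] at h2
        exact h2
      · refine Eventually.of_forall fun n => ?_
        simp only [Set.mem_compl_iff, Set.mem_singleton_iff]
        intro h
        have : (1 / ((n:ℝ) + 1)) = 0 := by exact_mod_cast h
        have : ((n:ℝ) + 1) ≠ 0 := by positivity
        simp_all
    exact ht.frequently (Frequently.of_forall fun n => hzero _)
  have hEq : Set.EqOn p.sum 0 Set.univ :=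
    han.eqOn_zero_of_preconnected_of_frequently_eq_zero isPreconnected_univ
      (Set.mem_univ 0) hfreq
  have hp0 : p = 0 := by
    apply hball.hasFPowerSeriesAt.eq_zero_of_eventually
    exact Eventually.of_forall fun z => hEq (Set.mem_univ z)
  -- conclude
  intro k hk
  have hak : a k = 0 := by
    have := congrFun (congrArg (fun q : FormalMultilinearSeries ℂ ℂ ℂ => q) hp0) k
    have hpk : p k = 0 := by rw [hp0]; rfl
    rwa [hp, FormalMultilinearSeries.ofScalars_eq_zero] at hpk
  rw [ha] at hak
  simp only [hk, if_true] at hak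
  rcases mul_eq_zero.mp hak with h | h
  · exact h
  · exfalso
    have : (m k : ℂ) ≠ 0 := Complex.ofReal_ne_zero.mpr (ne_of_lt (hmneg k hk))
    exact this h
end
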